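/- Let n = 4a + b, where a ≥ 0 and 0 ≤ b ≤ 3 are integers. If G is a graph on n vertices with exactly 6a + b(b−1)/2 edges containing no copy of P_5 as a subgraph, then G is isomorphic to the disjoint union of a copies of K_4 together with one copy of K_b (i.e., aK_4 ∪ K_b is the unique extremal P_5-free graph on n vertices). -/

import Mathlib

/-- `G` contains the path on `t` vertices as a subgraph. -/
def ContainsPath (t : ℕ) {V : Type*} (G : SimpleGraph V) : Prop :=
  ∃ f : Fin t → V, Function.Injective f ∧
    ∀ i j : Fin t, (i : ℕ) + 1 = (j : ℕ) → G.Adj (f i) (f j)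

/-- The graph on `Fin n` formed by the edges of colour `c`. -/
def colorClass {n r : ℕ} (C : Sym2 (Fin n) → Fin r) (c : Fin r) : SimpleGraph (Fin n) :=
  SimpleGraph.fromEdgeSet {e | C e = c}

/-- The colouring `C` contains a monochromatic path on `t` vertices. -/
def HasMonoPath (t : ℕ) {n r : ℕ} (C : Sym2 (Fin n) → Fin r) : Prop :=
  ∃ c : Fin r, ContainsPath t (colorClass C c)

/-- The `r`-coloured Ramsey number of the path on `t` vertices. -/
noncomputable def pathRamsey (r t : ℕ) : ℕ :=
  sInf {n | ∀ C : Sym2 (Fin n) → Fin r, HasMonoPath t C}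

/-- The Turán number of the path on `t` vertices. -/
noncomputable def exPath (t n : ℕ) : ℕ :=
  sSup {m | ∃ G : SimpleGraph (Fin n), ¬ ContainsPath t G ∧ G.edgeSet.ncard = m}

/-- The graph `aK₄ ∪ K_b` on `4a + b` vertices: `a` disjoint copies of `K₄` on the
consecutive blocks of four vertices, together with a clique on the last `b` vertices. -/
def cliquesK4Kb (a b : ℕ) : SimpleGraph (Fin (4 * a + b)) :=
  SimpleGraph.fromRel (fun x y =>
    ((x : ℕ) / 4 = (y : ℕ) / 4 ∧ (x : ℕ) < 4 * a ∧ (y : ℕ) < 4 * a) ∨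
    (4 * a ≤ (x : ℕ) ∧ 4 * a ≤ (y : ℕ)))

namespace TuranP5

def fT (n : ℕ) : ℕ := 6 * (n / 4) + (n % 4) * (n % 4 - 1) / 2

lemma fT_spec (a b : ℕ) (hb : b ≤ 3) : fT (4 * a + b) = 6 * a + b * (b - 1) / 2 := by
  have h1 : (4 * a + b) / 4 = a := by omega
  have h2 : (4 * a + b) % 4 = b := by omega
  simp [fT, h1, h2]

lemma fT_decomp (k : ℕ) : ∃ q r, r ≤ 3 ∧ k = 4 * q + r ∧ fT k = 6 * q + r * (r - 1) / 2 := by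
  refine ⟨k / 4, k % 4, by omega, by omega, ?_⟩
  conv_lhs => rw [show k = 4 * (k / 4) + k % 4 by omega]
  exact fT_spec _ _ (by omega)

-- numeric lemma for L1 (upper bound)
lemma NL1 {n m eS eR : ℕ} (hm1 : 1 ≤ m) (hmn : m ≤ n)
    (hS4 : m ≤ 4 → eS ≤ m * (m - 1) / 2) (hS5 : 5 ≤ m → eS ≤ m)
    (hR : eR ≤ fT (n - m)) : eS + eR ≤ fT n := by
  obtain ⟨q, r, hr, hrep, hfr⟩ := fT_decomp (n - m)
  obtain ⟨a, b, hb, hnab, hfn⟩ := fT_decomp n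
  rw [hfr] at hR
  rw [hfn]
  rcases le_or_gt m 4 with h4 | h5
  · have := hS4 h4
    interval_cases m <;> interval_cases b <;> interval_cases r <;> omega
  · have := hS5 (by omega)
    interval_cases b <;> interval_cases r <;> omega

-- numeric lemma for equality analysis
lemma N2 {a b n m eS eR : ℕ} (hb : b ≤ 3) (hn : n = 4 * a + b)
    (hm1 : 1 ≤ m) (hmn : m ≤ n)
    (hS4 : m ≤ 4 → eS ≤ m * (m - 1) / 2) (hS5 : 5 ≤ m → eS ≤ m)
    (hR : eR ≤ fT (n - m)) (heq : eS + eR = 6 * a + b * (b - 1) / 2) :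
    (m = 4 ∧ eS = 6 ∧ eR = fT (n - m)) ∨
    (m = b ∧ 1 ≤ b ∧ eS = b * (b - 1) / 2 ∧ eR = fT (n - m)) := by
  obtain ⟨q, r, hr, hrep, hfr⟩ := fT_decomp (n - m)
  rw [hfr] at hR ⊢
  rcases le_or_gt m 4 with h4 | h5
  · have := hS4 h4
    interval_cases m <;> interval_cases b <;> interval_cases r <;> omega
  · have := hS5 (by omega)
    exfalso
    interval_cases b <;> interval_cases r <;> omega


section Paths

variable {V : Type*} {G : SimpleGraph V}

lemma cp3 {v0 v1 v2 : V} (h01 : G.Adj v0 v1) (h12 : G.Adj v1 v2) (d02 : v0 ≠ v2) :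
    ContainsPath 3 G := by
  refine ⟨![v0, v1, v2], ?_, ?_⟩
  · intro i j hij
    have d01 := h01.ne
    have d12 := h12.ne
    fin_cases i <;> fin_cases j <;> simp_all
  · intro i j hij
    fin_cases i <;> fin_cases j <;> simp_all

lemma cp4 {v0 v1 v2 v3 : V} (h01 : G.Adj v0 v1) (h12 : G.Adj v1 v2) (h23 : G.Adj v2 v3)
    (d02 : v0 ≠ v2) (d03 : v0 ≠ v3) (d13 : v1 ≠ v3) :
    ContainsPath 4 G := by
  refine ⟨![v0, v1, v2, v3], ?_, ?_⟩
  · intro i j hij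
    have d01 := h01.ne
    have d12 := h12.ne
    have d23 := h23.ne
    fin_cases i <;> fin_cases j <;> simp_all
  · intro i j hij
    fin_cases i <;> fin_cases j <;> simp_all

lemma cp5 {v0 v1 v2 v3 v4 : V} (h01 : G.Adj v0 v1) (h12 : G.Adj v1 v2) (h23 : G.Adj v2 v3)
    (h34 : G.Adj v3 v4)
    (d02 : v0 ≠ v2) (d03 : v0 ≠ v3) (d04 : v0 ≠ v4) (d13 : v1 ≠ v3) (d14 : v1 ≠ v4)
    (d24 : v2 ≠ v4) :
    ContainsPath 5 G := by
  refine ⟨![v0, v1, v2, v3, v4], ?_, ?_⟩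
  · intro i j hij
    have d01 := h01.ne
    have d12 := h12.ne
    have d23 := h23.ne
    have d34 := h34.ne
    fin_cases i <;> fin_cases j <;> simp_all
  · intro i j hij
    fin_cases i <;> fin_cases j <;> simp_all

lemma free_induce {S : Set V} (hfree : ¬ ContainsPath 5 G) :
    ¬ ContainsPath 5 (G.induce S) := by
  rintro ⟨f, hinj, hadj⟩
  exact hfree ⟨fun i => (f i : V), Subtype.val_injective.comp hinj,
    fun i j hij => hadj i j hij⟩

/-- crossing edge out of a set -/
lemma T1 (hconn : G.Preconnected) {S : Set V} {sa sb : V} (ha : sa ∈ S) (hb : sb ∉ S) :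
    ∃ u v, u ∈ S ∧ v ∉ S ∧ G.Adj u v := by
  obtain ⟨w⟩ := hconn sa sb
  clear hconn
  induction w with
  | nil => exact absurd ha hb
  | @cons u c d h p ih =>
    by_cases hc : c ∈ S
    · exact ih hc hb
    · exact ⟨u, c, ha, hc, h⟩

lemma T2' {P : Set V} : ∀ {u x : V} (_ : G.Walk u x), u ∉ P → x ∈ P →
    ∃ y z, y ∉ P ∧ z ∈ P ∧ G.Adj y z ∧ (y = u ∨ ∃ y', y' ∉ P ∧ G.Adj y' y) := by
  intro u x w
  induction w with
  | nil => intro hu hx; exact absurd hx hu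
  | @cons u c d h p ih =>
    intro hu hx
    by_cases hc : c ∈ P
    · exact ⟨u, c, hu, hc, h, Or.inl rfl⟩
    · obtain ⟨y, z, hy, hz, hyz, halt⟩ := ih hc hx
      refine ⟨y, z, hy, hz, hyz, Or.inr ?_⟩
      rcases halt with rfl | ⟨y', hy', hy'y⟩
      · exact ⟨u, hu, h⟩
      · exact ⟨y', hy', hy'y⟩

lemma T2 (hconn : G.Preconnected) {P : Set V} {p x : V} (hp : p ∉ P) (hx : x ∈ P) :
    ∃ y z, y ∉ P ∧ z ∈ P ∧ G.Adj y z ∧ (y = p ∨ ∃ y', y' ∉ P ∧ G.Adj y' y) :=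
  T2' (hconn p x).some hp hx

lemma exists_fifth [Fintype V] (h5 : 5 ≤ Fintype.card V) (x1 x2 x3 x4 : V) :
    ∃ y, y ≠ x1 ∧ y ≠ x2 ∧ y ≠ x3 ∧ y ≠ x4 := by
  classical
  by_contra h
  push_neg at h
  have hsub : (Finset.univ : Finset V) ⊆ {x1, x2, x3, x4} := by
    intro y _
    by_cases e1 : y = x1
    · simp [e1]
    by_cases e2 : y = x2
    · simp [e2]
    by_cases e3 : y = x3
    · simp [e3]
    simp [h y e1 e2 e3]
  have hle := Finset.card_le_card hsub
  have i1 := Finset.card_insert_le x1 ({x2, x3, x4} : Finset V)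
  have i2 := Finset.card_insert_le x2 ({x3, x4} : Finset V)
  have i3 := Finset.card_insert_le x3 ({x4} : Finset V)
  have i4 : ({x4} : Finset V).card = 1 := Finset.card_singleton _
  rw [Finset.card_univ] at hle
  have : ({x1, x2, x3, x4} : Finset V).card ≤ 4 := by
    show (insert x1 ({x2, x3, x4} : Finset V)).card ≤ 4
    omega
  omega


end Paths

section Count

variable {V : Type*} [Fintype V] {G : SimpleGraph V}

open Finset

lemma mem_inc [DecidableEq V] [DecidableRel G.Adj] {v p q : V} (hadj : G.Adj p q)
    (hv : v = p ∨ v = q) : s(p, q) ∈ G.incidenceFinset v := by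
  rw [SimpleGraph.mem_incidenceFinset]
  refine ⟨(SimpleGraph.mem_edgeSet G).mpr hadj, ?_⟩
  rcases hv with rfl | rfl
  · exact Sym2.mem_mk_left _ _
  · exact Sym2.mem_mk_right _ _

lemma CNT [DecidableEq V] [DecidableRel G.Adj] {u w : V} (huw : G.Adj u w)
    (cover : ∀ p q, G.Adj p q → p = u ∨ p = w ∨ q = u ∨ q = w)
    (hcom : (G.neighborFinset u ∩ G.neighborFinset w).card ≤ 1) :
    G.edgeFinset.card ≤ Fintype.card V := by
  have hsub : G.edgeFinset ⊆ G.incidenceFinset u ∪ G.incidenceFinset w := by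
    intro e he
    induction e with
    | h p q =>
      have hadj : G.Adj p q := by rwa [SimpleGraph.mem_edgeFinset, SimpleGraph.mem_edgeSet] at he
      rcases cover p q hadj with h | h | h | h
      · exact mem_union_left _ (mem_inc hadj (Or.inl h.symm))
      · exact mem_union_right _ (mem_inc hadj (Or.inl h.symm))
      · exact mem_union_left _ (mem_inc hadj (Or.inr h.symm))
      · exact mem_union_right _ (mem_inc hadj (Or.inr h.symm))
  have hedge : G.edgeFinset.card ≤ (G.incidenceFinset u ∪ G.incidenceFinset w).card :=
    card_le_card hsub
  have hkey := Finset.card_union_add_card_inter (G.incidenceFinset u) (G.incidenceFinset w)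
  have hmem : s(u, w) ∈ G.incidenceFinset u ∩ G.incidenceFinset w := by
    rw [mem_inter]
    exact ⟨mem_inc huw (Or.inl rfl), mem_inc huw (Or.inr rfl)⟩
  have h1 : 1 ≤ (G.incidenceFinset u ∩ G.incidenceFinset w).card :=
    card_pos.mpr ⟨_, hmem⟩
  have hiu : (G.incidenceFinset u).card = G.degree u := G.card_incidenceFinset_eq_degree u
  have hiw : (G.incidenceFinset w).card = G.degree w := G.card_incidenceFinset_eq_degree w
  have hdeg : G.degree u + G.degree w ≤ Fintype.card V + 1 := by
    have h2 := Finset.card_union_add_card_inter (G.neighborFinset u) (G.neighborFinset w)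
    have h3 : (G.neighborFinset u ∪ G.neighborFinset w).card ≤ Fintype.card V := by
      simpa using card_le_card (subset_univ (G.neighborFinset u ∪ G.neighborFinset w))
    rw [← G.card_neighborFinset_eq_degree u, ← G.card_neighborFinset_eq_degree w, ← h2]
    omega
  omega


end Count

section Conn

variable {V : Type*} [Fintype V] [DecidableEq V] {G : SimpleGraph V} [DecidableRel G.Adj]

lemma TRI (hfree : ¬ ContainsPath 5 G) (hconn : G.Preconnected) (h5 : 5 ≤ Fintype.card V)
    {x1 x2 x3 x4 : V} (a12 : G.Adj x1 x2) (a23 : G.Adj x2 x3) (a34 : G.Adj x3 x4)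
    (d13 : x1 ≠ x3) (d14 : x1 ≠ x4) (d24 : x2 ≠ x4)
    (h14 : ¬ G.Adj x1 x4) (h13 : G.Adj x1 x3) :
    G.edgeFinset.card ≤ Fintype.card V := by
  set P : Set V := {v | v = x1 ∨ v = x2 ∨ v = x3 ∨ v = x4} with hP
  have m1 : x1 ∈ P := Or.inl rfl
  have m2 : x2 ∈ P := Or.inr (Or.inl rfl)
  have m3 : x3 ∈ P := Or.inr (Or.inr (Or.inl rfl))
  have m4 : x4 ∈ P := Or.inr (Or.inr (Or.inr rfl))
  have notP : ∀ {y}, y ∉ P → y ≠ x1 ∧ y ≠ x2 ∧ y ≠ x3 ∧ y ≠ x4 := by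
    intro y hy
    refine ⟨fun h => hy ?_, fun h => hy ?_, fun h => hy ?_, fun h => hy ?_⟩
    · exact Or.inl h
    · exact Or.inr (Or.inl h)
    · exact Or.inr (Or.inr (Or.inl h))
    · exact Or.inr (Or.inr (Or.inr h))
  have hend1 : ∀ y, y ∉ P → ¬ G.Adj y x1 := by
    intro y hy hadj
    obtain ⟨e1, e2, e3, e4⟩ := notP hy
    exact hfree (cp5 hadj a12 a23 a34 e2 e3 e4 d13 d14 d24)
  have hend4 : ∀ y, y ∉ P → ¬ G.Adj y x4 := by
    intro y hy hadj
    obtain ⟨e1, e2, e3, e4⟩ := notP hy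
    exact hfree (cp5 hadj a34.symm a23.symm a12.symm e3 e2 e1 d24.symm d14.symm d13.symm)
  have hout2 : ∀ y, y ∉ P → ¬ G.Adj y x2 := by
    intro y hy hadj
    obtain ⟨e1, e2, e3, e4⟩ := notP hy
    exact hfree (cp5 hadj a12.symm h13 a34 e1 e3 e4 a23.ne d24 d14)
  have h24 : ¬ G.Adj x2 x4 := by
    intro h24
    obtain ⟨y0, hy1, hy2, hy3, hy4⟩ := exists_fifth h5 x1 x2 x3 x4
    have hy0 : y0 ∉ P := by
      rintro (h | h | h | h)
      exacts [hy1 h, hy2 h, hy3 h, hy4 h]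
    obtain ⟨u, v, hu, hv, huv⟩ := T1 hconn m1 hy0
    obtain ⟨e1, e2, e3, e4⟩ := notP hv
    rcases hu with rfl | rfl | rfl | rfl
    · exact hend1 v hv huv.symm
    · exact hout2 v hv huv.symm
    · exact hfree (cp5 huv.symm a34 h24.symm a12.symm e4 e2 e1 a23.ne.symm d13.symm d14.symm)
    · exact hend4 v hv huv.symm
  have cover : ∀ p q, G.Adj p q → p = x1 ∨ p = x3 ∨ q = x1 ∨ q = x3 := by
    intro p q hpq
    by_contra hcon
    push_neg at hcon
    obtain ⟨hp1, hp3, hq1, hq3⟩ := hcon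
    by_cases hpP : p ∈ P
    · rcases hpP with rfl | rfl | rfl | rfl
      · exact hp1 rfl
      · -- p = x2
        by_cases hqP : q ∈ P
        · rcases hqP with rfl | rfl | rfl | rfl
          · exact hq1 rfl
          · exact hpq.ne rfl
          · exact hq3 rfl
          · exact h24 hpq
        · exact hout2 q hqP hpq.symm
      · exact hp3 rfl
      · -- p = x4
        by_cases hqP : q ∈ P
        · rcases hqP with rfl | rfl | rfl | rfl
          · exact hq1 rfl
          · exact h24 hpq.symm
          · exact hq3 rfl
          · exact hpq.ne rfl
        · exact hend4 q hqP hpq.symm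
    · by_cases hqP : q ∈ P
      · rcases hqP with rfl | rfl | rfl | rfl
        · exact hq1 rfl
        · exact hout2 p hpP hpq
        · exact hq3 rfl
        · exact hend4 p hpP hpq
      · obtain ⟨y, z, hy, hz, hyz, halt⟩ := T2 hconn hpP m1
        have hy'' : ∃ y'', y'' ∉ P ∧ G.Adj y'' y := by
          rcases halt with rfl | h
          · exact ⟨q, hqP, hpq.symm⟩
          · exact h
        obtain ⟨y'', hy''P, hy''y⟩ := hy''
        obtain ⟨e1, e2, e3, e4⟩ := notP hy
        obtain ⟨g1, g2, g3, g4⟩ := notP hy''P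
        rcases hz with rfl | rfl | rfl | rfl
        · exact hend1 y hy hyz
        · exact hout2 y hy hyz
        · exact hfree (cp5 hy''y hyz h13.symm a12 g3 g1 g2 e1 e2 a23.ne.symm)
        · exact hend4 y hy hyz
  have common : (G.neighborFinset x1 ∩ G.neighborFinset x3).card ≤ 1 := by
    have hsub : G.neighborFinset x1 ∩ G.neighborFinset x3 ⊆ {x2} := by
      intro z hzm
      rw [Finset.mem_inter, SimpleGraph.mem_neighborFinset, SimpleGraph.mem_neighborFinset] at hzm
      obtain ⟨hz1, hz3⟩ := hzm
      rw [Finset.mem_singleton]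
      by_cases hzP : z ∈ P
      · rcases hzP with rfl | rfl | rfl | rfl
        · exact absurd rfl hz1.ne
        · rfl
        · exact absurd rfl hz3.ne
        · exact absurd hz1 h14
      · exact absurd hz1.symm (hend1 z hzP)
    exact (Finset.card_le_card hsub).trans (by simp)
  exact CNT h13 cover common


lemma conn_bound (hfree : ¬ ContainsPath 5 G) (hconn : G.Preconnected)
    (h5 : 5 ≤ Fintype.card V) : G.edgeFinset.card ≤ Fintype.card V := by
  by_cases hP4 : ContainsPath 4 G
  · obtain ⟨f, finj, fadj⟩ := hP4
    set x1 := f 0 with hx1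
    set x2 := f 1 with hx2
    set x3 := f 2 with hx3
    set x4 := f 3 with hx4
    have a12 : G.Adj x1 x2 := fadj 0 1 (by decide)
    have a23 : G.Adj x2 x3 := fadj 1 2 (by decide)
    have a34 : G.Adj x3 x4 := fadj 2 3 (by decide)
    have d13 : x1 ≠ x3 := fun h => absurd (finj h) (by decide)
    have d14 : x1 ≠ x4 := fun h => absurd (finj h) (by decide)
    have d24 : x2 ≠ x4 := fun h => absurd (finj h) (by decide)
    set P : Set V := {v | v = x1 ∨ v = x2 ∨ v = x3 ∨ v = x4} with hP
    have m1 : x1 ∈ P := Or.inl rfl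
    have m2 : x2 ∈ P := Or.inr (Or.inl rfl)
    have m3 : x3 ∈ P := Or.inr (Or.inr (Or.inl rfl))
    have m4 : x4 ∈ P := Or.inr (Or.inr (Or.inr rfl))
    have notP : ∀ {y}, y ∉ P → y ≠ x1 ∧ y ≠ x2 ∧ y ≠ x3 ∧ y ≠ x4 := by
      intro y hy
      refine ⟨fun h => hy ?_, fun h => hy ?_, fun h => hy ?_, fun h => hy ?_⟩
      · exact Or.inl h
      · exact Or.inr (Or.inl h)
      · exact Or.inr (Or.inr (Or.inl h))
      · exact Or.inr (Or.inr (Or.inr h))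
    have hend1 : ∀ y, y ∉ P → ¬ G.Adj y x1 := by
      intro y hy hadj
      obtain ⟨e1, e2, e3, e4⟩ := notP hy
      exact hfree (cp5 hadj a12 a23 a34 e2 e3 e4 d13 d14 d24)
    have hend4 : ∀ y, y ∉ P → ¬ G.Adj y x4 := by
      intro y hy hadj
      obtain ⟨e1, e2, e3, e4⟩ := notP hy
      exact hfree (cp5 hadj a34.symm a23.symm a12.symm e3 e2 e1 d24.symm d14.symm d13.symm)
    by_cases h14 : G.Adj x1 x4
    · exfalso
      obtain ⟨y0, hy1, hy2, hy3, hy4⟩ := exists_fifth h5 x1 x2 x3 x4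
      have hy0 : y0 ∉ P := by
        rintro (h | h | h | h)
        exacts [hy1 h, hy2 h, hy3 h, hy4 h]
      obtain ⟨u, v, hu, hv, huv⟩ := T1 hconn m1 hy0
      obtain ⟨e1, e2, e3, e4⟩ := notP hv
      rcases hu with rfl | rfl | rfl | rfl
      · exact hend1 v hv huv.symm
      · exact hfree (cp5 huv.symm a12.symm h14 a34.symm e1 e4 e3 d24 a23.ne d13)
      · exact hfree (cp5 huv.symm a34 h14.symm a12 e4 e1 e2 d13.symm a23.ne.symm d24.symm)
      · exact hend4 v hv huv.symm
    by_cases h13 : G.Adj x1 x3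
    · exact TRI hfree hconn h5 a12 a23 a34 d13 d14 d24 h14 h13
    by_cases h24 : G.Adj x2 x4
    · exact TRI hfree hconn h5 a34.symm a23.symm a12.symm d24.symm d14.symm d13.symm
        (fun h => h14 h.symm) h24.symm
    -- chordless case, cover {x2, x3}
    have cover : ∀ p q, G.Adj p q → p = x2 ∨ p = x3 ∨ q = x2 ∨ q = x3 := by
      intro p q hpq
      by_contra hcon
      push_neg at hcon
      obtain ⟨hp2, hp3, hq2, hq3⟩ := hcon
      by_cases hpP : p ∈ P
      · rcases hpP with rfl | rfl | rfl | rfl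
        · -- p = x1
          by_cases hqP : q ∈ P
          · rcases hqP with rfl | rfl | rfl | rfl
            · exact hpq.ne rfl
            · exact hq2 rfl
            · exact hq3 rfl
            · exact h14 hpq
          · exact hend1 q hqP hpq.symm
        · exact hp2 rfl
        · exact hp3 rfl
        · -- p = x4
          by_cases hqP : q ∈ P
          · rcases hqP with rfl | rfl | rfl | rfl
            · exact h14 hpq.symm
            · exact hq2 rfl
            · exact hq3 rfl
            · exact hpq.ne rfl
          · exact hend4 q hqP hpq.symm
      · by_cases hqP : q ∈ P
        · rcases hqP with rfl | rfl | rfl | rfl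
          · exact hend1 p hpP hpq
          · exact hq2 rfl
          · exact hq3 rfl
          · exact hend4 p hpP hpq
        · obtain ⟨y, z, hy, hz, hyz, halt⟩ := T2 hconn hpP m1
          have hy'' : ∃ y'', y'' ∉ P ∧ G.Adj y'' y := by
            rcases halt with rfl | h
            · exact ⟨q, hqP, hpq.symm⟩
            · exact h
          obtain ⟨y'', hy''P, hy''y⟩ := hy''
          obtain ⟨e1, e2, e3, e4⟩ := notP hy
          obtain ⟨g1, g2, g3, g4⟩ := notP hy''P
          rcases hz with rfl | rfl | rfl | rfl
          · exact hend1 y hy hyz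
          · exact hfree (cp5 hy''y hyz a23 a34 g2 g3 g4 e3 e4 d24)
          · exact hfree (cp5 hy''y hyz a23.symm a12.symm g3 g2 g1 e2 e1 d13.symm)
          · exact hend4 y hy hyz
    have common : (G.neighborFinset x2 ∩ G.neighborFinset x3).card ≤ 1 := by
      have hsub : G.neighborFinset x2 ∩ G.neighborFinset x3 ⊆ {x2} := by
        intro z hzm
        rw [Finset.mem_inter, SimpleGraph.mem_neighborFinset,
          SimpleGraph.mem_neighborFinset] at hzm
        obtain ⟨hz2, hz3⟩ := hzm
        rw [Finset.mem_singleton]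
        by_cases hzP : z ∈ P
        · rcases hzP with rfl | rfl | rfl | rfl
          · exact absurd hz3.symm h13
          · exact absurd rfl hz2.ne
          · exact absurd rfl hz3.ne
          · exact absurd hz2 h24
        · exfalso
          obtain ⟨e1, e2, e3, e4⟩ := notP hzP
          exact hfree (cp5 a12 hz2 hz3.symm a34 e1.symm d13 d14 a23.ne d24 e4)
      exact (Finset.card_le_card hsub).trans (by simp)
    exact CNT a23 cover common
  · -- no P4: find a P3
    have hP3 : ContainsPath 3 G := by
      have hpos : 0 < Fintype.card V := by omega
      obtain ⟨v⟩ := Fintype.card_pos_iff.mp hpos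
      obtain ⟨z0, hz0, -, -, -⟩ := exists_fifth h5 v v v v
      obtain ⟨u, z, hu, hz, huz⟩ := T1 (S := {x | x = v}) hconn rfl hz0
      rcases hu with rfl
      obtain ⟨w0, hw1, hw2, -, -⟩ := exists_fifth h5 u z z z
      have hw0 : w0 ∉ ({x | x = u ∨ x = z} : Set V) := by
        rintro (h | h)
        exacts [hw1 h, hw2 h]
      obtain ⟨u', t, hu', ht, hut⟩ := T1 (S := {x | x = u ∨ x = z}) hconn (Or.inl rfl) hw0
      have ht1 : t ≠ u := fun h => ht (Or.inl h)
      have ht2 : t ≠ z := fun h => ht (Or.inr h)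
      rcases hu' with rfl | rfl
      · exact cp3 hut.symm huz ht2
      · exact cp3 hut.symm huz.symm ht1
    obtain ⟨f, finj, fadj⟩ := hP3
    set x1 := f 0 with hx1
    set x2 := f 1 with hx2
    set x3 := f 2 with hx3
    have a12 : G.Adj x1 x2 := fadj 0 1 (by decide)
    have a23 : G.Adj x2 x3 := fadj 1 2 (by decide)
    have d13 : x1 ≠ x3 := fun h => absurd (finj h) (by decide)
    set P : Set V := {v | v = x1 ∨ v = x2 ∨ v = x3} with hP
    have m1 : x1 ∈ P := Or.inl rfl
    have m2 : x2 ∈ P := Or.inr (Or.inl rfl)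
    have m3 : x3 ∈ P := Or.inr (Or.inr rfl)
    have notP : ∀ {y}, y ∉ P → y ≠ x1 ∧ y ≠ x2 ∧ y ≠ x3 := by
      intro y hy
      refine ⟨fun h => hy ?_, fun h => hy ?_, fun h => hy ?_⟩
      · exact Or.inl h
      · exact Or.inr (Or.inl h)
      · exact Or.inr (Or.inr h)
    have hend1 : ∀ y, y ∉ P → ¬ G.Adj y x1 := by
      intro y hy hadj
      obtain ⟨e1, e2, e3⟩ := notP hy
      exact hP4 (cp4 hadj a12 a23 e2 e3 d13)
    have hend3 : ∀ y, y ∉ P → ¬ G.Adj y x3 := by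
      intro y hy hadj
      obtain ⟨e1, e2, e3⟩ := notP hy
      exact hP4 (cp4 hadj a23.symm a12.symm e2 e1 d13.symm)
    have htri : ¬ G.Adj x1 x3 := by
      intro h13
      obtain ⟨y0, hy1, hy2, hy3, -⟩ := exists_fifth h5 x1 x2 x3 x3
      have hy0 : y0 ∉ P := by
        rintro (h | h | h)
        exacts [hy1 h, hy2 h, hy3 h]
      obtain ⟨u, v, hu, hv, huv⟩ := T1 hconn m1 hy0
      obtain ⟨e1, e2, e3⟩ := notP hv
      rcases hu with rfl | rfl | rfl
      · exact hend1 v hv huv.symm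
      · exact hP4 (cp4 huv.symm a12.symm h13 e1 e3 a23.ne)
      · exact hend3 v hv huv.symm
    have cover : ∀ p q, G.Adj p q → p = x2 ∨ q = x2 := by
      intro p q hpq
      by_contra hcon
      push_neg at hcon
      obtain ⟨hp2, hq2⟩ := hcon
      by_cases hpP : p ∈ P
      · rcases hpP with rfl | rfl | rfl
        · by_cases hqP : q ∈ P
          · rcases hqP with rfl | rfl | rfl
            · exact hpq.ne rfl
            · exact hq2 rfl
            · exact htri hpq
          · exact hend1 q hqP hpq.symm
        · exact hp2 rfl
        · by_cases hqP : q ∈ P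
          · rcases hqP with rfl | rfl | rfl
            · exact htri hpq.symm
            · exact hq2 rfl
            · exact hpq.ne rfl
          · exact hend3 q hqP hpq.symm
      · by_cases hqP : q ∈ P
        · rcases hqP with rfl | rfl | rfl
          · exact hend1 p hpP hpq
          · exact hq2 rfl
          · exact hend3 p hpP hpq
        · obtain ⟨y, z, hy, hz, hyz, halt⟩ := T2 hconn hpP m1
          have hy'' : ∃ y'', y'' ∉ P ∧ G.Adj y'' y := by
            rcases halt with rfl | h
            · exact ⟨q, hqP, hpq.symm⟩
            · exact h
          obtain ⟨y'', hy''P, hy''y⟩ := hy''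
          obtain ⟨e1, e2, e3⟩ := notP hy
          obtain ⟨g1, g2, g3⟩ := notP hy''P
          rcases hz with rfl | rfl | rfl
          · exact hend1 y hy hyz
          · exact hP4 (cp4 hy''y hyz a12.symm g2 g1 e1)
          · exact hend3 y hy hyz
    have hsub : G.edgeFinset ⊆ G.incidenceFinset x2 := by
      intro e he
      induction e with
      | h p q =>
        have hadj : G.Adj p q := by
          rwa [SimpleGraph.mem_edgeFinset, SimpleGraph.mem_edgeSet] at he
        rcases cover p q hadj with h | h
        · exact mem_inc hadj (Or.inl h.symm)
        · exact mem_inc hadj (Or.inr h.symm)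
    have := Finset.card_le_card hsub
    rw [G.card_incidenceFinset_eq_degree] at this
    have := G.degree_lt_card_verts x2
    omega


end Conn

section Split

variable {V : Type*} {G : SimpleGraph V}

lemma induce_walk_reach {S : Set V} (hS : ∀ u w, u ∈ S → G.Adj u w → w ∈ S) :
    ∀ {u x : V} (_ : G.Walk u x) (hu : u ∈ S) (hx : x ∈ S),
      (G.induce S).Reachable ⟨u, hu⟩ ⟨x, hx⟩ := by
  intro u x w
  induction w with
  | nil => intro hu hx; exact SimpleGraph.Reachable.refl _
  | @cons u c d h p ih =>
    intro hu hx
    have hc : c ∈ S := hS _ _ hu h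
    have hadj : (G.induce S).Adj ⟨u, hu⟩ ⟨c, hc⟩ := h
    exact hadj.reachable.trans (ih hc hx)

lemma induce_reach {S : Set V} (hS : ∀ u w, u ∈ S → G.Adj u w → w ∈ S) {u x : V}
    (hu : u ∈ S) (hx : x ∈ S) (h : G.Reachable u x) :
    (G.induce S).Reachable ⟨u, hu⟩ ⟨x, hx⟩ := by
  obtain ⟨w⟩ := h
  exact induce_walk_reach hS w hu hx

/-- ncard of edge set equals edgeFinset card -/
lemma ncard_edge [Fintype V] (G : SimpleGraph V) [Fintype G.edgeSet] :
    G.edgeSet.ncard = G.edgeFinset.card :=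
  Set.ncard_eq_toFinset_card' _

lemma edge_split [Fintype V] (G : SimpleGraph V) (S : Set V)
    (hS : ∀ u w, u ∈ S → G.Adj u w → w ∈ S) :
    G.edgeSet.ncard = (G.induce S).edgeSet.ncard + (G.induce Sᶜ).edgeSet.ncard := by
  classical
  set A : Set (Sym2 V) := (Sym2.map (Subtype.val : S → V)) '' (G.induce S).edgeSet with hA
  set B : Set (Sym2 V) := (Sym2.map (Subtype.val : ↥Sᶜ → V)) '' (G.induce Sᶜ).edgeSet with hB
  have hSc : ∀ u w, u ∈ Sᶜ → G.Adj u w → w ∈ Sᶜ := by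
    intro u w hu huw hw
    exact hu (hS w u hw huw.symm)
  have hAS : ∀ e ∈ A, ∀ x ∈ e, x ∈ S := by
    rintro e ⟨e', he', rfl⟩ x hx
    rw [Sym2.mem_map] at hx
    obtain ⟨a, -, rfl⟩ := hx
    exact a.2
  have hBS : ∀ e ∈ B, ∀ x ∈ e, x ∉ S := by
    rintro e ⟨e', he', rfl⟩ x hx
    rw [Sym2.mem_map] at hx
    obtain ⟨a, -, rfl⟩ := hx
    exact a.2
  have hunion : G.edgeSet = A ∪ B := by
    ext e
    constructor
    · intro he
      induction e with
      | h p q =>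
        have hadj : G.Adj p q := he
        by_cases hp : p ∈ S
        · have hq : q ∈ S := hS _ _ hp hadj
          exact Or.inl ⟨s(⟨p, hp⟩, ⟨q, hq⟩), hadj, by rw [Sym2.map_pair_eq]⟩
        · have hq : q ∈ Sᶜ := hSc _ _ hp hadj
          exact Or.inr ⟨s(⟨p, hp⟩, ⟨q, hq⟩), hadj, by rw [Sym2.map_pair_eq]⟩
    · rintro (⟨e', he', rfl⟩ | ⟨e', he', rfl⟩)
      · induction e' with
        | h a b =>
          have : G.Adj a.1 b.1 := he'
          rw [Sym2.map_pair_eq]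
          exact this
      · induction e' with
        | h a b =>
          have : G.Adj a.1 b.1 := he'
          rw [Sym2.map_pair_eq]
          exact this
  have hdisj : Disjoint A B := by
    rw [Set.disjoint_left]
    intro e heA heB
    induction e with
    | h p q =>
      exact hBS _ heB p (Sym2.mem_mk_left _ _) (hAS _ heA p (Sym2.mem_mk_left _ _))
  rw [hunion, Set.ncard_union_eq hdisj (Set.toFinite A) (Set.toFinite B), hA, hB,
    Set.ncard_image_of_injective _ (Sym2.map.injective Subtype.val_injective),
    Set.ncard_image_of_injective _ (Sym2.map.injective Subtype.val_injective)]

lemma complete_of_card [Fintype V] (G : SimpleGraph V)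
    (h : G.edgeSet.ncard = Fintype.card V * (Fintype.card V - 1) / 2) :
    ∀ u w : V, u ≠ w → G.Adj u w := by
  classical
  intro u w huw
  have hsub : G.edgeFinset ⊆ (⊤ : SimpleGraph V).edgeFinset :=
    SimpleGraph.edgeFinset_mono le_top
  have htop : (⊤ : SimpleGraph V).edgeFinset.card = (Fintype.card V).choose 2 :=
    SimpleGraph.card_edgeFinset_top_eq_card_choose_two
  have heq : G.edgeFinset = (⊤ : SimpleGraph V).edgeFinset := by
    apply Finset.eq_of_subset_of_card_le hsub
    rw [htop, Nat.choose_two_right, ← ncard_edge, h]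
  have : s(u, w) ∈ G.edgeFinset := by
    rw [heq, SimpleGraph.mem_edgeFinset]
    exact huw
  rwa [SimpleGraph.mem_edgeFinset, SimpleGraph.mem_edgeSet] at this

lemma edge_bound_choose [Fintype V] (G : SimpleGraph V) :
    G.edgeSet.ncard ≤ Fintype.card V * (Fintype.card V - 1) / 2 := by
  classical
  rw [ncard_edge, ← Nat.choose_two_right]
  exact SimpleGraph.card_edgeFinset_le_card_choose_two

lemma ncard_S (S : Set V) : S.ncard = Nat.card ↥S := (Nat.card_coe_set_eq S).symm

lemma ncard_compl [Fintype V] (S : Set V) : Sᶜ.ncard = Fintype.card V - S.ncard := by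
  have := Set.ncard_add_ncard_compl S (Set.toFinite S) (Set.toFinite Sᶜ)
  rw [Nat.card_eq_fintype_card] at this
  omega

lemma L1 : ∀ n : ℕ, ∀ {V : Type*} [Fintype V] (G : SimpleGraph V), Fintype.card V = n →
    ¬ ContainsPath 5 G → G.edgeSet.ncard ≤ fT n := by
  intro n
  induction n using Nat.strong_induction_on with
  | _ n ih =>
    intro V _ G hcard hfree
    classical
    rcases Nat.eq_zero_or_pos n with rfl | hpos
    · have : IsEmpty V := Fintype.card_eq_zero_iff.mp hcard
      have : G.edgeSet = ∅ := by
        ext e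
        induction e with
        | h p q => exact isEmptyElim p
      simp [this]
    · obtain ⟨v₀⟩ := Fintype.card_pos_iff.mp (hcard ▸ hpos)
      set S : Set V := {u | G.Reachable v₀ u} with hSdef
      have hS : ∀ u w, u ∈ S → G.Adj u w → w ∈ S := fun u w hu h => hu.trans h.reachable
      have hSc : ∀ u w, u ∈ Sᶜ → G.Adj u w → w ∈ Sᶜ := fun u w hu huw hw =>
        hu (hS w u hw huw.symm)
      set m := S.ncard with hm
      have hv₀ : v₀ ∈ S := SimpleGraph.Reachable.refl v₀
      have hm1 : 1 ≤ m := (Set.ncard_pos (Set.toFinite S)).mpr ⟨v₀, hv₀⟩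
      have hcardS : Fintype.card ↥S = m := by rw [hm, ncard_S, Nat.card_eq_fintype_card]
      have hmn : m ≤ n := by
        rw [hm, ncard_S, Nat.card_eq_fintype_card, ← hcard]
        exact Fintype.card_le_of_injective _ Subtype.val_injective
      have hcardSc : Fintype.card ↥(Sᶜ) = n - m := by
        rw [show Fintype.card ↥(Sᶜ) = Sᶜ.ncard by rw [ncard_S, Nat.card_eq_fintype_card],
          ncard_compl, hcard]
      have hfreeS := free_induce (S := S) hfree
      have hfreeSc := free_induce (S := Sᶜ) hfree
      have hconnS : (G.induce S).Preconnected := by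
        rintro ⟨u, hu⟩ ⟨x, hx⟩
        exact induce_reach hS hu hx (hu.symm.trans hx)
      have hR : (G.induce Sᶜ).edgeSet.ncard ≤ fT (n - m) := by
        refine ih (n - m) (by omega) _ hcardSc hfreeSc
      have hS4 : m ≤ 4 → (G.induce S).edgeSet.ncard ≤ m * (m - 1) / 2 := by
        intro _
        have := edge_bound_choose (G.induce S)
        rwa [hcardS] at this
      have hS5 : 5 ≤ m → (G.induce S).edgeSet.ncard ≤ m := by
        intro h5
        have := conn_bound hfreeS hconnS (by rw [hcardS]; exact h5)
        rw [← ncard_edge, hcardS] at this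
        exact this
      rw [edge_split G S hS]
      exact NL1 hm1 hmn hS4 hS5 hR


end Split

lemma cliq_adj {a b : ℕ} (x y : Fin (4 * a + b)) : (cliquesK4Kb a b).Adj x y ↔
    (x : ℕ) ≠ (y : ℕ) ∧ (((x : ℕ) / 4 = (y : ℕ) / 4 ∧ (x : ℕ) < 4 * a ∧ (y : ℕ) < 4 * a) ∨
      (4 * a ≤ (x : ℕ) ∧ 4 * a ≤ (y : ℕ))) := by
  rw [cliquesK4Kb, SimpleGraph.fromRel_adj]
  simp only [ne_eq, Fin.ext_iff]
  omega

lemma target_adj_lt4 {a b : ℕ} (ha : 1 ≤ a) (x y : Fin (4 * a + b))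
    (hx : (x : ℕ) < 4) (hy : (y : ℕ) < 4) :
    (cliquesK4Kb a b).Adj x y ↔ x ≠ y := by
  rw [cliq_adj]
  simp only [ne_eq, Fin.ext_iff]
  omega

lemma target_adj_high {a b : ℕ} (x y : Fin (4 * a + b))
    (hx : 4 * a ≤ (x : ℕ)) (hy : 4 * a ≤ (y : ℕ)) :
    (cliquesK4Kb a b).Adj x y ↔ x ≠ y := by
  rw [cliq_adj]
  simp only [ne_eq, Fin.ext_iff]
  omega

lemma target_not_adj_cross4 {a b : ℕ} (ha : 1 ≤ a) (x y : Fin (4 * a + b))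
    (hx : (x : ℕ) < 4) (hy : 4 ≤ (y : ℕ)) : ¬ (cliquesK4Kb a b).Adj x y := by
  rw [cliq_adj]
  have := y.isLt
  rintro ⟨h1, h2 | h2⟩ <;> omega

lemma target_not_adj_crossA {a b : ℕ} (x y : Fin (4 * a + b))
    (hx : (x : ℕ) < 4 * a) (hy : 4 * a ≤ (y : ℕ)) : ¬ (cliquesK4Kb a b).Adj x y := by
  rw [cliq_adj]
  rintro ⟨h1, h2 | h2⟩ <;> omega

lemma target_adj_shift {a b : ℕ} (ha : 1 ≤ a) (x y : Fin (4 * (a - 1) + b))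
    (x' y' : Fin (4 * a + b)) (hx : (x' : ℕ) = 4 + (x : ℕ)) (hy : (y' : ℕ) = 4 + (y : ℕ)) :
    (cliquesK4Kb a b).Adj x' y' ↔ (cliquesK4Kb (a - 1) b).Adj x y := by
  rw [cliq_adj, cliq_adj]
  have := x.isLt
  have := y.isLt
  omega

lemma target_adj_cast {a b : ℕ} (x y : Fin (4 * a + 0)) (x' y' : Fin (4 * a + b))
    (hx : (x' : ℕ) = (x : ℕ)) (hy : (y' : ℕ) = (y : ℕ)) :
    (cliquesK4Kb a b).Adj x' y' ↔ (cliquesK4Kb a 0).Adj x y := by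
  rw [cliq_adj, cliq_adj]
  have := x.isLt
  have := y.isLt
  omega


theorem main_aux : ∀ n : ℕ, ∀ a b : ℕ, b ≤ 3 → 4 * a + b = n →
    ∀ {V : Type*} [Fintype V] (G : SimpleGraph V), Fintype.card V = n →
    ¬ ContainsPath 5 G → G.edgeSet.ncard = 6 * a + b * (b - 1) / 2 →
    Nonempty (G ≃g cliquesK4Kb a b) := by
  intro n
  induction n using Nat.strong_induction_on with
  | _ n ih =>
  intro a b hb hn V _ G hcard hfree hedges
  classical
  rcases Nat.eq_zero_or_pos n with rfl | hpos
  · have ha0 : a = 0 := by omega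
    have hb0 : b = 0 := by omega
    subst ha0; subst hb0
    have hV : IsEmpty V := Fintype.card_eq_zero_iff.mp hcard
    have hF : IsEmpty (Fin (4 * 0 + 0)) := by
      constructor
      intro x
      exact absurd x.isLt (by norm_num)
    exact ⟨{ toEquiv := @Equiv.equivOfIsEmpty _ _ hV hF,
             map_rel_iff' := by intro u v; exact isEmptyElim u }⟩
  obtain ⟨v₀⟩ := Fintype.card_pos_iff.mp (hcard ▸ hpos)
  set S : Set V := {u | G.Reachable v₀ u} with hSdef
  have hS : ∀ u w, u ∈ S → G.Adj u w → w ∈ S := fun u w hu h => hu.trans h.reachable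
  have hScl : ∀ u w, u ∈ Sᶜ → G.Adj u w → w ∈ Sᶜ := fun u w hu huw hw =>
    hu (hS w u hw huw.symm)
  set m := S.ncard with hm
  have hv₀ : v₀ ∈ S := SimpleGraph.Reachable.refl v₀
  have hm1 : 1 ≤ m := (Set.ncard_pos (Set.toFinite S)).mpr ⟨v₀, hv₀⟩
  have hcardS : Fintype.card ↥S = m := by rw [hm, ncard_S, Nat.card_eq_fintype_card]
  have hmn : m ≤ n := by
    rw [hm, ncard_S, Nat.card_eq_fintype_card, ← hcard]
    exact Fintype.card_le_of_injective _ Subtype.val_injective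
  have hcardSc : Fintype.card ↥(Sᶜ) = n - m := by
    rw [show Fintype.card ↥(Sᶜ) = Sᶜ.ncard by rw [ncard_S, Nat.card_eq_fintype_card],
      ncard_compl, hcard]
  have hfreeS := free_induce (S := S) hfree
  have hfreeSc := free_induce (S := Sᶜ) hfree
  have hconnS : (G.induce S).Preconnected := by
    rintro ⟨u, hu⟩ ⟨x, hx⟩
    exact induce_reach hS hu hx (hu.symm.trans hx)
  have hR : (G.induce Sᶜ).edgeSet.ncard ≤ fT (n - m) :=
    L1 (n - m) (G.induce Sᶜ) hcardSc hfreeSc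
  have hS4 : m ≤ 4 → (G.induce S).edgeSet.ncard ≤ m * (m - 1) / 2 := by
    intro _
    have := edge_bound_choose (G.induce S)
    rwa [hcardS] at this
  have hS5 : 5 ≤ m → (G.induce S).edgeSet.ncard ≤ m := by
    intro h5
    have := conn_bound hfreeS hconnS (by rw [hcardS]; exact h5)
    rw [← ncard_edge, hcardS] at this
    exact this
  have heq2 : (G.induce S).edgeSet.ncard + (G.induce Sᶜ).edgeSet.ncard
      = 6 * a + b * (b - 1) / 2 := by
    rw [← edge_split G S hS, hedges]
  rcases N2 hb hn.symm hm1 hmn hS4 hS5 hR heq2 with ⟨hm4, heS, heR⟩ | ⟨hmb, hb1, heS, heR⟩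
  · -- K4 component
    have ha1 : 1 ≤ a := by omega
    have hcS4 : Fintype.card ↥S = 4 := by rw [hcardS, hm4]
    have hcomp := complete_of_card (G.induce S) (by rw [hcS4, heS])
    have hcardSc' : Fintype.card ↥(Sᶜ) = 4 * (a - 1) + b := by omega
    have hedgesSc : (G.induce Sᶜ).edgeSet.ncard = 6 * (a - 1) + b * (b - 1) / 2 := by
      rw [heR, hm4, show n - 4 = 4 * (a - 1) + b by omega]
      exact fT_spec _ _ hb
    obtain ⟨ψ⟩ := ih (n - 4) (by omega) (a - 1) b hb (by omega) (G.induce Sᶜ)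
      (by rw [hcardSc']; omega) hfreeSc hedgesSc
    let φ : ↥S ≃ Fin 4 := Fintype.equivFinOfCardEq hcS4
    have hsum : 4 + (4 * (a - 1) + b) = 4 * a + b := by omega
    let E : V ≃ Fin (4 * a + b) :=
      (Equiv.sumCompl (· ∈ S)).symm.trans
        ((φ.sumCongr ψ.toEquiv).trans (finSumFinEquiv.trans (finCongr hsum)))
    have hES : ∀ (u : V) (hu : u ∈ S), (E u : ℕ) = (φ ⟨u, hu⟩ : ℕ) := by
      intro u hu
      simp [E, Equiv.sumCompl_symm_apply_of_pos, Equiv.sumCompl_symm_apply_of_neg, Equiv.trans_apply, Equiv.sumCongr_apply, Sum.map_inl, Sum.map_inr, Equiv.sumComm_apply, Sum.swap_inl, Sum.swap_inr, finSumFinEquiv_apply_left, finSumFinEquiv_apply_right, finCongr_apply, Fin.coe_cast, Fin.coe_castAdd, Fin.coe_natAdd, hu]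
    have hEC : ∀ (u : V) (hu : u ∉ S), (E u : ℕ) = 4 + (ψ ⟨u, hu⟩ : ℕ) := by
      intro u hu
      simp [E, Equiv.sumCompl_symm_apply_of_pos, Equiv.sumCompl_symm_apply_of_neg, Equiv.trans_apply, Equiv.sumCongr_apply, Sum.map_inl, Sum.map_inr, Equiv.sumComm_apply, Sum.swap_inl, Sum.swap_inr, finSumFinEquiv_apply_left, finSumFinEquiv_apply_right, finCongr_apply, Fin.coe_cast, Fin.coe_castAdd, Fin.coe_natAdd, hu]
    refine ⟨{ toEquiv := E, map_rel_iff' := ?_ }⟩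
    intro u v
    show (cliquesK4Kb a b).Adj (E u) (E v) ↔ G.Adj u v
    by_cases hu : u ∈ S <;> by_cases hv : v ∈ S
    · rw [target_adj_lt4 ha1 _ _ (by rw [hES u hu]; exact (φ ⟨u, hu⟩).isLt)
        (by rw [hES v hv]; exact (φ ⟨v, hv⟩).isLt)]
      constructor
      · intro hne
        have huv : u ≠ v := fun h => hne (by rw [h])
        exact hcomp ⟨u, hu⟩ ⟨v, hv⟩ (fun h => huv (congrArg Subtype.val h))
      · intro hadj
        exact fun h => hadj.ne (E.injective h)
    · refine iff_of_false ?_ (fun h => hv (hS u v hu h))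
      exact target_not_adj_cross4 ha1 _ _ (by rw [hES u hu]; exact (φ ⟨u, hu⟩).isLt)
        (by rw [hEC v hv]; omega)
    · refine iff_of_false ?_ (fun h => hu (hS v u hv h.symm))
      intro h
      exact target_not_adj_cross4 ha1 _ _ (by rw [hES v hv]; exact (φ ⟨v, hv⟩).isLt)
        (by rw [hEC u hu]; omega) h.symm
    · rw [target_adj_shift ha1 (ψ ⟨u, hu⟩) (ψ ⟨v, hv⟩) _ _ (hEC u hu) (hEC v hv)]
      exact ψ.map_rel_iff
  · -- K_b component
    have hcSb : Fintype.card ↥S = b := by rw [hcardS, hmb]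
    have hcomp := complete_of_card (G.induce S) (by rw [hcSb, heS])
    have hcardSc' : Fintype.card ↥(Sᶜ) = 4 * a + 0 := by omega
    have hedgesSc : (G.induce Sᶜ).edgeSet.ncard = 6 * a + 0 * (0 - 1) / 2 := by
      rw [heR, hmb, show n - b = 4 * a + 0 by omega]
      exact fT_spec _ _ (by norm_num)
    obtain ⟨ψ⟩ := ih (n - b) (by omega) a 0 (by norm_num) (by omega) (G.induce Sᶜ)
      (by rw [hcardSc']; omega) hfreeSc hedgesSc
    let φ : ↥S ≃ Fin b := Fintype.equivFinOfCardEq hcSb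
    have hsum : (4 * a + 0) + b = 4 * a + b := by omega
    let E : V ≃ Fin (4 * a + b) :=
      (Equiv.sumCompl (· ∈ S)).symm.trans
        ((Equiv.sumComm _ _).trans
          ((ψ.toEquiv.sumCongr φ).trans (finSumFinEquiv.trans (finCongr hsum))))
    have hES : ∀ (u : V) (hu : u ∈ S), (E u : ℕ) = (4 * a + 0) + (φ ⟨u, hu⟩ : ℕ) := by
      intro u hu
      simp [E, Equiv.sumCompl_symm_apply_of_pos, Equiv.sumCompl_symm_apply_of_neg, Equiv.trans_apply, Equiv.sumCongr_apply, Sum.map_inl, Sum.map_inr, Equiv.sumComm_apply, Sum.swap_inl, Sum.swap_inr, finSumFinEquiv_apply_left, finSumFinEquiv_apply_right, finCongr_apply, Fin.coe_cast, Fin.coe_castAdd, Fin.coe_natAdd, hu]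
    have hEC : ∀ (u : V) (hu : u ∉ S), (E u : ℕ) = (ψ ⟨u, hu⟩ : ℕ) := by
      intro u hu
      simp [E, Equiv.sumCompl_symm_apply_of_pos, Equiv.sumCompl_symm_apply_of_neg, Equiv.trans_apply, Equiv.sumCongr_apply, Sum.map_inl, Sum.map_inr, Equiv.sumComm_apply, Sum.swap_inl, Sum.swap_inr, finSumFinEquiv_apply_left, finSumFinEquiv_apply_right, finCongr_apply, Fin.coe_cast, Fin.coe_castAdd, Fin.coe_natAdd, hu]
    refine ⟨{ toEquiv := E, map_rel_iff' := ?_ }⟩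
    intro u v
    show (cliquesK4Kb a b).Adj (E u) (E v) ↔ G.Adj u v
    by_cases hu : u ∈ S <;> by_cases hv : v ∈ S
    · rw [target_adj_high _ _ (by rw [hES u hu]; omega) (by rw [hES v hv]; omega)]
      constructor
      · intro hne
        have huv : u ≠ v := fun h => hne (by rw [h])
        exact hcomp ⟨u, hu⟩ ⟨v, hv⟩ (fun h => huv (congrArg Subtype.val h))
      · intro hadj
        exact fun h => hadj.ne (E.injective h)
    · refine iff_of_false ?_ (fun h => hv (hS u v hu h))
      intro h
      exact target_not_adj_crossA _ _
        (by rw [hEC v hv]; have := (ψ ⟨v, hv⟩).isLt; omega)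
        (by rw [hES u hu]; omega) h.symm
    · refine iff_of_false ?_ (fun h => hu (hS v u hv h.symm))
      exact target_not_adj_crossA _ _
        (by rw [hEC u hu]; have := (ψ ⟨u, hu⟩).isLt; omega)
        (by rw [hES v hv]; omega)
    · rw [target_adj_cast (ψ ⟨u, hu⟩) (ψ ⟨v, hv⟩) _ _ (hEC u hu) (hEC v hv)]
      exact ψ.map_rel_iff


end TuranP5

/-- Theorem 2.1 (Faudree–Schelp), uniqueness: the unique `P₅`-free graph on `n = 4a + b`
vertices (`0 ≤ b ≤ 3`) with `ex(n, P₅) = 6a + b(b-1)/2` edges is `aK₄ ∪ K_b`. -/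
theorem turan_P5_extremal_graph (a b : ℕ) (hb : b ≤ 3) {V : Type*} [Fintype V]
    (G : SimpleGraph V) (hcard : Fintype.card V = 4 * a + b)
    (hfree : ¬ ContainsPath 5 G)
    (hedges : G.edgeSet.ncard = 6 * a + b * (b - 1) / 2) :
    Nonempty (G ≃g cliquesK4Kb a b) :=
  TuranP5.main_aux (4 * a + b) a b hb rfl G hcard hfree hedges
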